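/- Let (𝒰,γ) be a partitioned permutation on n points with γ not the identity. Then the Möbius function satisfies μ(𝒰,γ) = δ(𝒰,γ) + Σ_{k≥1} Σ (−1)^k, where the inner sum is over all tuples (π₁,…,π_k) of non-identity permutations with (0,π₁)···(0,π_k) = (𝒰,γ); moreover the number of factors k in any such factorization is bounded by |(𝒰,γ)| = 2|𝒰| − |γ|, so the sum is finite. -/

import Mathlib

open Equiv

def orbitSetoid {α : Type*} (π : Equiv.Perm α) : Setoid α where
  r := π.SameCycle
  iseqv := ⟨fun x => Equiv.Perm.SameCycle.refl π x, fun h => h.symm, fun h h' => h.trans h'⟩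

noncomputable def cycleCount {n : ℕ} (π : Equiv.Perm (Fin n)) : ℕ :=
  Nat.card (Quotient (orbitSetoid π))

noncomputable def pLen {n : ℕ} (V : Setoid (Fin n)) : ℤ :=
  (n : ℤ) - Nat.card (Quotient V)

noncomputable def permLen {n : ℕ} (π : Equiv.Perm (Fin n)) : ℤ :=
  (n : ℤ) - cycleCount π

theorem orbitSetoid_mul_le {α : Type*} (π σ : Equiv.Perm α) :
    orbitSetoid (π * σ) ≤ orbitSetoid π ⊔ orbitSetoid σ := by
  set S := orbitSetoid π ⊔ orbitSetoid σ with hS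
  have hstep : ∀ x, S.r x ((π * σ) x) := by
    intro x
    have h1 : S.r x (σ x) := Setoid.le_def.mp le_sup_right ⟨1, by simp⟩
    have h2 : S.r (σ x) (π (σ x)) := Setoid.le_def.mp le_sup_left ⟨1, by simp⟩
    exact S.iseqv.trans h1 h2
  have hpow : ∀ (k : ℤ) (x : α), S.r x (((π * σ) ^ k) x) := by
    intro k
    induction k using Int.induction_on with
    | zero => intro x; simpa using S.iseqv.refl x
    | succ k ih =>
        intro x
        have h : ((π * σ) ^ ((k : ℤ) + 1)) x = ((π * σ) ^ (k : ℤ)) ((π * σ) x) := by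
          rw [zpow_add_one]
          simp [Equiv.Perm.mul_apply]
        rw [h]
        exact S.iseqv.trans (hstep x) (ih ((π * σ) x))
    | pred k ih =>
        intro x
        have h : ((π * σ) ^ (-(k : ℤ) - 1)) x = ((π * σ) ^ (-(k : ℤ))) ((π * σ)⁻¹ x) := by
          rw [zpow_sub_one]
          simp [Equiv.Perm.mul_apply]
        rw [h]
        have hinv : S.r x ((π * σ)⁻¹ x) := by
          have h2 := hstep ((π * σ)⁻¹ x)
          simp only [Equiv.Perm.inv_def, Equiv.apply_symm_apply] at h2
          exact S.iseqv.symm h2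
        exact S.iseqv.trans hinv (ih ((π * σ)⁻¹ x))
  rw [Setoid.le_def]
  rintro x y ⟨k, hk⟩
  exact hk ▸ hpow k x

/-- A partitioned permutation: a pair `(𝒱, π)` with `𝒱` a partition of `{1,…,n}`
(encoded as a setoid on `Fin n`) coarser than the orbit partition of `π`. -/
structure PartitionedPerm (n : ℕ) where
  part : Setoid (Fin n)
  perm : Equiv.Perm (Fin n)
  hle : orbitSetoid perm ≤ part

/-- The length `|(𝒱,π)| := 2|𝒱| − |π|` of a partitioned permutation. -/
noncomputable def ppLen {n : ℕ} (a : PartitionedPerm n) : ℤ :=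
  2 * pLen a.part - permLen a.perm

/-- The product of partitioned permutations: `(𝒱,π)·(𝒲,σ) = (𝒱∨𝒲, πσ)` if the
lengths add up, and `0` (here: `none`) otherwise. -/
noncomputable def ppMul {n : ℕ} (a b : PartitionedPerm n) : Option (PartitionedPerm n) :=
  if ppLen a + ppLen b = 2 * pLen (a.part ⊔ b.part) - permLen (a.perm * b.perm)
  then some ⟨a.part ⊔ b.part, a.perm * b.perm,
        le_trans (orbitSetoid_mul_le a.perm b.perm) (sup_le_sup a.hle b.hle)⟩
  else none

/-- The full cycle `γ_n = (1,2,…,n)`. -/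
def gammaCycle (n : ℕ) : Equiv.Perm (Fin n) := finRotate n

/-- The permutation `γ_{m,n} = (1,…,m)(m+1,…,m+n)` consisting of two full cycles. -/
def gammaTwo (m n : ℕ) : Equiv.Perm (Fin (m + n)) :=
  (Equiv.permCongr finSumFinEquiv) (Equiv.sumCongr (finRotate m) (finRotate n))

/-- The partitioned permutation `(1_n, γ_n)`. -/
noncomputable def topGamma (n : ℕ) : PartitionedPerm n :=
  ⟨⊤, gammaCycle n, le_top⟩

/-- The partitioned permutation `(1_{m+n}, γ_{m,n})`. -/
noncomputable def topGammaTwo (m n : ℕ) : PartitionedPerm (m + n) :=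
  ⟨⊤, gammaTwo m n, le_top⟩

/-- `π` is a non-crossing permutation of `{1,…,n}`: `|π| + |π⁻¹γ_n| = n − 1`. -/
def IsNC {n : ℕ} (π : Equiv.Perm (Fin n)) : Prop :=
  permLen π + permLen (π⁻¹ * gammaCycle n) = (n : ℤ) - 1

theorem quotient_mk_perm_apply {n : ℕ} (a : PartitionedPerm n) (x : Fin n) :
    Quotient.mk a.part (a.perm x) = Quotient.mk a.part x :=
  (Quotient.sound (Setoid.le_def.mp a.hle ⟨1, by simp⟩)).symm

/-- The permutation induced by `π` on a block of `𝒱` (for a partitioned permutation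
`(𝒱,π)`), transported to `Fin k` where `k` is the size of the block. -/
noncomputable def blockPerm {n : ℕ} (a : PartitionedPerm n) (c : Quotient a.part) :
    Equiv.Perm (Fin (Nat.card {x : Fin n // Quotient.mk a.part x = c})) :=
  (Finite.equivFin _).permCongr
    (a.perm.subtypePerm (p := fun x => Quotient.mk a.part x = c)
      (fun x => by rw [quotient_mk_perm_apply]))

/-- A multiplicative function on partitioned permutations: its value on `(1_n, π)`
depends only on the conjugacy class of `π`, and its value on a general `(𝒱,π)`
is the product over the blocks of `𝒱` of the values on `(1_V, π|_V)`. -/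
def IsMultiplicativeFn (f : ∀ n, PartitionedPerm n → ℂ) : Prop :=
  (∀ (n : ℕ) (π σ : Equiv.Perm (Fin n)),
      f n ⟨⊤, σ * π * σ⁻¹, le_top⟩ = f n ⟨⊤, π, le_top⟩) ∧
  (∀ (n : ℕ) (a : PartitionedPerm n),
      f n a = ∏ᶠ c : Quotient a.part,
        f (Nat.card {x : Fin n // Quotient.mk a.part x = c}) ⟨⊤, blockPerm a c, le_top⟩)

/-- The convolution of functions on partitioned permutations:
`(f∗g)(𝒰,γ) = Σ_{(𝒱,π)·(𝒲,σ) = (𝒰,γ)} f(𝒱,π) g(𝒲,σ)`. -/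
noncomputable def ppConv (f g : ∀ n, PartitionedPerm n → ℂ) : ∀ n, PartitionedPerm n → ℂ :=
  fun n u =>
    ∑ᶠ p ∈ {p : PartitionedPerm n × PartitionedPerm n | ppMul p.1 p.2 = some u},
      f n p.1 * g n p.2

open Classical in
/-- The zeta function on partitioned permutations: `ζ(𝒱,π) = 1` if `𝒱 = 0_π` (disc
permutations) and `0` otherwise. -/
noncomputable def zetaFn : ∀ n, PartitionedPerm n → ℂ :=
  fun _ a => if a.part = orbitSetoid a.perm then 1 else 0

open Classical in
/-- The delta function, the unit of convolution: `δ(𝒱,π) = 1` iff `π = id` and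
`𝒱 = 0_π`. -/
noncomputable def deltaFn : ∀ n, PartitionedPerm n → ℂ :=
  fun _ a => if a.perm = 1 ∧ a.part = orbitSetoid a.perm then 1 else 0

/-- The identity partitioned permutation `(0_e, e)`. -/
def ppOne (n : ℕ) : PartitionedPerm n := ⟨orbitSetoid 1, 1, le_refl _⟩

/-- The product `(0,π₁)·(0,π₂)···(0,π_k)` of a list of partitioned permutations, with
value `none` (i.e. `0`) if any partial product vanishes. -/
noncomputable def ppListProd {n : ℕ} (l : List (PartitionedPerm n)) :
    Option (PartitionedPerm n) :=
  l.foldr (fun a o => o.bind (fun b => ppMul a b)) (some (ppOne n))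

section Aux

variable {n : ℕ}

theorem PartitionedPerm.ext' {a b : PartitionedPerm n} (h1 : a.part = b.part)
    (h2 : a.perm = b.perm) : a = b := by
  cases a; cases b; simp_all

instance : Finite (Setoid (Fin n)) := by
  apply Finite.of_injective (fun s : Setoid (Fin n) => (s.r : Fin n → Fin n → Prop))
  intro s t h
  exact Setoid.ext fun x y => iff_of_eq (congrFun (congrFun h x) y)

instance : Finite (PartitionedPerm n) := by
  apply Finite.of_injective (fun a : PartitionedPerm n => (a.part, a.perm))
  intro a b h
  exact PartitionedPerm.ext' (congrArg Prod.fst h) (congrArg Prod.snd h)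

instance : Inhabited (PartitionedPerm n) := ⟨⟨⊤, 1, le_top⟩⟩

theorem orbitSetoid_one_le (V : Setoid (Fin n)) : orbitSetoid (1 : Equiv.Perm (Fin n)) ≤ V := by
  rw [Setoid.le_def]
  intro x y h
  rcases h with ⟨k, hk⟩
  simp only [one_zpow, Equiv.Perm.one_apply] at hk
  exact hk ▸ V.iseqv.refl x

theorem quot_mk_one_injective :
    Function.Injective (Quotient.mk (orbitSetoid (1 : Equiv.Perm (Fin n)))) := by
  intro x y h
  have := Quotient.exact h
  rcases this with ⟨k, hk⟩
  simpa using hk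

theorem quot_mk_surjective (V : Setoid (Fin n)) :
    Function.Surjective (Quotient.mk V) := fun q => ⟨q.out, Quotient.out_eq q⟩

theorem cycleCount_one : cycleCount (1 : Equiv.Perm (Fin n)) = n := by
  unfold cycleCount
  rw [← Nat.card_eq_of_bijective _ ⟨quot_mk_one_injective, quot_mk_surjective _⟩]
  simp

theorem card_quot_le (V : Setoid (Fin n)) : Nat.card (Quotient V) ≤ n := by
  have := Nat.card_le_card_of_surjective _ (quot_mk_surjective V)
  simpa using this

theorem card_quot_mono {s t : Setoid (Fin n)} (h : s ≤ t) :
    Nat.card (Quotient t) ≤ Nat.card (Quotient s) := by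
  apply Nat.card_le_card_of_surjective
    (Quotient.lift (Quotient.mk t) fun a b hab => Quotient.sound (Setoid.le_def.mp h hab))
  intro q
  exact ⟨Quotient.mk s q.out, by simpa using Quotient.out_eq q⟩

theorem permLen_nonneg (π : Equiv.Perm (Fin n)) : 0 ≤ permLen π := by
  have := card_quot_le (orbitSetoid π)
  unfold permLen
  have : cycleCount π = Nat.card (Quotient (orbitSetoid π)) := rfl
  omega

theorem permLen_one : permLen (1 : Equiv.Perm (Fin n)) = 0 := by
  unfold permLen
  rw [cycleCount_one]; ring

theorem permLen_pos {π : Equiv.Perm (Fin n)} (h : π ≠ 1) : 1 ≤ permLen π := by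
  have hle := card_quot_le (orbitSetoid π)
  have hne : cycleCount π ≠ n := by
    intro hc
    apply h
    have hbij : Function.Bijective (Quotient.mk (orbitSetoid π)) := by
      rw [Nat.bijective_iff_surjective_and_card]
      refine ⟨quot_mk_surjective _, ?_⟩
      unfold cycleCount at hc
      have : Nat.card (Fin n) = n := by simp
      rw [this]
      exact hc.symm
    apply Equiv.Perm.ext
    intro x
    have : Quotient.mk (orbitSetoid π) (π x) = Quotient.mk (orbitSetoid π) x :=
      Quotient.sound ((orbitSetoid π).iseqv.symm ⟨1, by simp⟩)
    simpa using hbij.1 this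
  unfold permLen
  have : cycleCount π = Nat.card (Quotient (orbitSetoid π)) := rfl
  omega

theorem pLen_orbit (π : Equiv.Perm (Fin n)) : pLen (orbitSetoid π) = permLen π := rfl

theorem ppLen_ge_permLen (a : PartitionedPerm n) : permLen a.perm ≤ ppLen a := by
  have h1 := card_quot_mono a.hle
  have h2 := card_quot_le a.part
  have h3 := card_quot_le (orbitSetoid a.perm)
  unfold ppLen pLen permLen cycleCount at *
  omega

theorem ppLen_nonneg (a : PartitionedPerm n) : 0 ≤ ppLen a :=
  le_trans (permLen_nonneg _) (ppLen_ge_permLen a)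

theorem ppLen_disc {a : PartitionedPerm n} (h : a.part = orbitSetoid a.perm) :
    ppLen a = permLen a.perm := by
  unfold ppLen
  rw [h, pLen_orbit]; ring

theorem ppLen_ppOne : ppLen (ppOne n) = 0 := by
  rw [ppLen_disc rfl]
  exact permLen_one

theorem ppMul_eq_some {a b u : PartitionedPerm n} (h : ppMul a b = some u) :
    u.part = a.part ⊔ b.part ∧ u.perm = a.perm * b.perm ∧ ppLen a + ppLen b = ppLen u := by
  unfold ppMul at h
  split_ifs at h with hc
  · obtain rfl := Option.some.inj h
    exact ⟨rfl, rfl, hc⟩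

theorem ppMul_one_left (b : PartitionedPerm n) : ppMul (ppOne n) b = some b := by
  have hsup : (ppOne n).part ⊔ b.part = b.part := sup_eq_right.mpr (orbitSetoid_one_le _)
  have hperm : (ppOne n).perm * b.perm = b.perm := one_mul _
  unfold ppMul
  rw [if_pos (by rw [hsup, hperm, ppLen_ppOne, zero_add]; rfl)]
  exact congrArg some (PartitionedPerm.ext' hsup hperm)

theorem ppMul_one_right (b : PartitionedPerm n) : ppMul b (ppOne n) = some b := by
  have hsup : b.part ⊔ (ppOne n).part = b.part := sup_eq_left.mpr (orbitSetoid_one_le _)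
  have hperm : b.perm * (ppOne n).perm = b.perm := mul_one _
  unfold ppMul
  rw [if_pos (by rw [hsup, hperm, ppLen_ppOne, add_zero]; rfl)]
  exact congrArg some (PartitionedPerm.ext' hsup hperm)

theorem eq_ppOne_iff {b : PartitionedPerm n} :
    b = ppOne n ↔ b.perm = 1 ∧ b.part = orbitSetoid b.perm := by
  constructor
  · rintro rfl; exact ⟨rfl, rfl⟩
  · rintro ⟨h1, h2⟩
    exact PartitionedPerm.ext' (by rw [h2, h1]; rfl) h1

theorem ppListProd_cons (a : PartitionedPerm n) (l : List (PartitionedPerm n)) :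
    ppListProd (a :: l) = (ppListProd l).bind (fun b => ppMul a b) := rfl

theorem ppListProd_nil : ppListProd ([] : List (PartitionedPerm n)) = some (ppOne n) := rfl

theorem length_le_ppLen : ∀ (l : List (PartitionedPerm n)),
    (∀ a ∈ l, a.part = orbitSetoid a.perm ∧ a.perm ≠ 1) →
    ∀ u, ppListProd l = some u → (l.length : ℤ) ≤ ppLen u := by
  intro l
  induction l with
  | nil =>
      intro _ u hu
      obtain rfl := Option.some.inj hu
      simp [ppLen_ppOne]
  | cons a t ih =>
      intro hc u hu
      rw [ppListProd_cons] at hu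
      obtain ⟨b, hb, hab⟩ := Option.bind_eq_some_iff.mp hu
      obtain ⟨-, -, hsum⟩ := ppMul_eq_some hab
      have h1 : (1 : ℤ) ≤ ppLen a := by
        rw [ppLen_disc (hc a (List.mem_cons_self)).1]
        exact permLen_pos (hc a (List.mem_cons_self)).2
      have h2 := ih (fun x hx => hc x (List.mem_cons_of_mem a hx)) b hb
      simp only [List.length_cons]
      push_cast
      omega

theorem facs_empty (u : PartitionedPerm n) (k : ℕ) (h : ppLen u < (k : ℤ)) :
    {l : List (PartitionedPerm n) | l.length = k ∧
      (∀ a ∈ l, a.part = orbitSetoid a.perm ∧ a.perm ≠ 1) ∧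
      ppListProd l = some u} = ∅ := by
  ext l
  simp only [Set.mem_setOf_eq, Set.mem_empty_iff_false, iff_false]
  rintro ⟨h1, h2, h3⟩
  have := length_le_ppLen l h2 u h3
  rw [h1] at this
  omega

theorem facs_finite (u : PartitionedPerm n) (k : ℕ) :
    {l : List (PartitionedPerm n) | l.length = k ∧
      (∀ a ∈ l, a.part = orbitSetoid a.perm ∧ a.perm ≠ 1) ∧
      ppListProd l = some u}.Finite :=
  (List.finite_length_eq _ k).subset (fun _ hl => hl.1)

noncomputable def Nfac {n : ℕ} (k : ℕ) (u : PartitionedPerm n) : ℕ :=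
  Nat.card {l : List (PartitionedPerm n) // l.length = k ∧
    (∀ a ∈ l, a.part = orbitSetoid a.perm ∧ a.perm ≠ 1) ∧ ppListProd l = some u}

theorem Nfac_eq_card (k : ℕ) (u : PartitionedPerm n) :
    Nfac k u = (facs_finite u k).toFinset.card := by
  rw [Nfac, ← Set.ncard_eq_toFinset_card _ (facs_finite u k), ← Nat.card_coe_set_eq]
  rfl

theorem Nfac_eq_zero {k : ℕ} {u : PartitionedPerm n} (h : ppLen u < (k : ℤ)) :
    Nfac k u = 0 := by
  rw [Nfac_eq_card]
  simp [facs_empty u k h]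

theorem Nfac_zero (b : PartitionedPerm n) :
    (Nfac 0 b : ℂ) = deltaFn n b := by
  rw [Nfac_eq_card]
  unfold deltaFn
  by_cases hb : b = ppOne n
  · rw [if_pos (eq_ppOne_iff.mp hb)]
    have : (facs_finite b 0).toFinset = {([] : List (PartitionedPerm n))} := by
      ext l
      simp only [Set.Finite.mem_toFinset, Set.mem_setOf_eq, Finset.mem_singleton,
        List.length_eq_zero_iff]
      constructor
      · rintro ⟨rfl, -, -⟩; rfl
      · rintro rfl
        refine ⟨rfl, by simp, ?_⟩
        rw [ppListProd_nil, hb]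
    rw [this]; simp
  · rw [if_neg (fun hc => hb (eq_ppOne_iff.mpr hc))]
    have : (facs_finite b 0).toFinset = ∅ := by
      ext l
      simp only [Set.Finite.mem_toFinset, Set.mem_setOf_eq, Finset.notMem_empty, iff_false,
        List.length_eq_zero_iff]
      rintro ⟨rfl, -, h3⟩
      rw [ppListProd_nil] at h3
      exact hb (Option.some.inj h3).symm
    rw [this]; simp

noncomputable def Sfin' {n : ℕ} (u : PartitionedPerm n) :
    Finset (PartitionedPerm n × PartitionedPerm n) :=
  (Set.toFinite {p : PartitionedPerm n × PartitionedPerm n |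
    ppMul p.1 p.2 = some u ∧ p.1.part = orbitSetoid p.1.perm ∧ p.1.perm ≠ 1}).toFinset

theorem mem_Sfin' {u : PartitionedPerm n} {p : PartitionedPerm n × PartitionedPerm n} :
    p ∈ Sfin' u ↔ ppMul p.1 p.2 = some u ∧ p.1.part = orbitSetoid p.1.perm ∧ p.1.perm ≠ 1 := by
  rw [Sfin', Set.Finite.mem_toFinset]; rfl

theorem claimB (u : PartitionedPerm n) (k : ℕ) :
    Nfac (k + 1) u = ∑ p ∈ Sfin' u, Nfac k p.2 := by
  classical
  rw [Nfac_eq_card]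
  rw [Finset.card_eq_sum_card_fiberwise
    (f := fun l : List (PartitionedPerm n) => (l.headI, (ppListProd l.tail).getD (ppOne n)))
    (t := Sfin' u) ?hf]
  case hf =>
    intro l hl
    rw [Finset.mem_coe, Set.Finite.mem_toFinset] at hl
    obtain ⟨hlen, hcond, hprod⟩ := hl
    have hne : l ≠ [] := by intro h; rw [h] at hlen; exact absurd hlen (by simp)
    obtain ⟨a, t, rfl⟩ := List.exists_cons_of_ne_nil hne
    rw [ppListProd_cons] at hprod
    obtain ⟨b, hb, hab⟩ := Option.bind_eq_some_iff.mp hprod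
    rw [Finset.mem_coe, mem_Sfin']
    simp only [List.headI_cons, List.tail_cons, hb, Option.getD_some]
    exact ⟨hab, (hcond a (List.mem_cons_self)).1, (hcond a (List.mem_cons_self)).2⟩
  refine Finset.sum_congr rfl (fun p hp => ?_)
  rw [mem_Sfin'] at hp
  obtain ⟨hpm, hpd, hpn⟩ := hp
  rw [Nfac_eq_card]
  apply Finset.card_bij' (fun l _ => l.tail) (fun t _ => p.1 :: t)
  · -- tail maps into the fiber set
    intro l hl
    rw [Finset.mem_filter, Set.Finite.mem_toFinset] at hl
    obtain ⟨⟨hlen, hcond, hprod⟩, hf⟩ := hl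
    have hne : l ≠ [] := by intro h; rw [h] at hlen; exact absurd hlen (by simp)
    obtain ⟨a, t, rfl⟩ := List.exists_cons_of_ne_nil hne
    rw [ppListProd_cons] at hprod
    obtain ⟨b, hb, hab⟩ := Option.bind_eq_some_iff.mp hprod
    simp only [List.headI_cons, List.tail_cons, hb, Option.getD_some] at hf
    subst hf
    rw [Set.Finite.mem_toFinset]
    simp only [List.tail_cons]
    exact ⟨by simpa using hlen, fun x hx => hcond x (List.mem_cons_of_mem a hx), hb⟩
  · intro t ht
    rw [Set.Finite.mem_toFinset] at ht
    obtain ⟨hlen, hcond, hprod⟩ := ht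
    rw [Finset.mem_filter, Set.Finite.mem_toFinset]
    refine ⟨⟨by simpa using hlen, ?_, ?_⟩, ?_⟩
    · intro x hx
      rcases List.mem_cons.mp hx with rfl | hx
      · exact ⟨hpd, hpn⟩
      · exact hcond x hx
    · rw [ppListProd_cons, hprod]
      simpa using hpm
    · simp only [List.headI_cons, List.tail_cons, hprod, Option.getD_some]
  · intro l hl
    rw [Finset.mem_filter, Set.Finite.mem_toFinset] at hl
    obtain ⟨⟨hlen, hcond, hprod⟩, hf⟩ := hl
    have hne : l ≠ [] := by intro h; rw [h] at hlen; exact absurd hlen (by simp)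
    obtain ⟨a, t, rfl⟩ := List.exists_cons_of_ne_nil hne
    subst hf
    simp
  · intro t _
    simp

theorem mu_eq {n : ℕ} (μ : ∀ n, PartitionedPerm n → ℂ)
    (hζμ : ppConv zetaFn μ = deltaFn) :
    ∀ (m : ℕ) (u : PartitionedPerm n), (ppLen u).toNat = m →
      μ n u = deltaFn n u + ∑ k ∈ Finset.Icc 1 (ppLen u).toNat,
        (-1 : ℂ) ^ k * (Nfac k u : ℂ) := by
  intro m
  induction m using Nat.strong_induction_on with
  | _ m ih =>
  intro u hm
  classical
  have hconv : ppConv zetaFn μ n u = deltaFn n u := congrFun (congrFun hζμ n) u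
  unfold ppConv at hconv
  rw [finsum_mem_eq_finite_toFinset_sum _ (Set.toFinite _)] at hconv
  set Sfin := (Set.toFinite {p : PartitionedPerm n × PartitionedPerm n |
    ppMul p.1 p.2 = some u}).toFinset with hSfin
  have hmem : (ppOne n, u) ∈ Sfin := by
    rw [hSfin, Set.Finite.mem_toFinset]
    exact ppMul_one_left u
  rw [← Finset.add_sum_erase _ _ hmem] at hconv
  have hzeta1 : zetaFn n (ppOne n) = 1 := by unfold zetaFn; exact if_pos rfl
  rw [hzeta1, one_mul] at hconv
  have hsub : Sfin' u ⊆ Sfin.erase (ppOne n, u) := by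
    intro p hp
    rw [mem_Sfin'] at hp
    rw [Finset.mem_erase]
    refine ⟨?_, by rw [hSfin, Set.Finite.mem_toFinset]; exact hp.1⟩
    intro hpe
    apply hp.2.2
    rw [hpe]
    rfl
  have herase : ∑ p ∈ Sfin.erase (ppOne n, u), zetaFn n p.1 * μ n p.2
      = ∑ p ∈ Sfin' u, μ n p.2 := by
    rw [← Finset.sum_subset hsub ?h0]
    · apply Finset.sum_congr rfl
      intro p hp
      rw [mem_Sfin'] at hp
      unfold zetaFn
      rw [if_pos hp.2.1, one_mul]
    case h0 =>
      intro p hp hnp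
      rw [Finset.mem_erase, hSfin, Set.Finite.mem_toFinset] at hp
      rw [mem_Sfin'] at hnp
      by_cases hdisc : p.1.part = orbitSetoid p.1.perm
      · exfalso
        have hperm1 : p.1.perm = 1 := by
          by_contra hne
          exact hnp ⟨hp.2, hdisc, hne⟩
        have hp1 : p.1 = ppOne n := eq_ppOne_iff.mpr ⟨hperm1, hdisc⟩
        have hp2 : p.2 = u := by
          have h2 : ppMul p.1 p.2 = some u := hp.2
          rw [hp1, ppMul_one_left] at h2
          exact Option.some.inj h2
        exact hp.1 (Prod.ext hp1 hp2)
      · unfold zetaFn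
        rw [if_neg hdisc, zero_mul]
  rw [herase] at hconv
  by_cases hm0 : m = 0
  · have hS0 : Sfin' u = ∅ := by
      rw [Finset.eq_empty_iff_forall_notMem]
      intro p hp
      rw [mem_Sfin'] at hp
      obtain ⟨-, -, hsum⟩ := ppMul_eq_some hp.1
      have h1 : (1 : ℤ) ≤ ppLen p.1 := by
        rw [ppLen_disc hp.2.1]; exact permLen_pos hp.2.2
      have h2 := ppLen_nonneg p.2
      have h3 := ppLen_nonneg u
      omega
    rw [hS0, Finset.sum_empty, add_zero] at hconv
    rw [hconv, show (ppLen u).toNat = 0 from hm0 ▸ hm]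
    simp
  · -- main case
    have hterm : ∀ p ∈ Sfin' u, μ n p.2
        = ∑ k ∈ Finset.Icc 0 (m - 1), (-1 : ℂ) ^ k * (Nfac k p.2 : ℂ) := by
      intro p hp
      rw [mem_Sfin'] at hp
      obtain ⟨-, -, hsum⟩ := ppMul_eq_some hp.1
      have h1 : (1 : ℤ) ≤ ppLen p.1 := by
        rw [ppLen_disc hp.2.1]; exact permLen_pos hp.2.2
      have h2 := ppLen_nonneg p.2
      have hlt : (ppLen p.2).toNat < m := by omega
      rw [ih _ hlt p.2 rfl]
      have hext : ∑ k ∈ Finset.Icc 1 (ppLen p.2).toNat, (-1 : ℂ) ^ k * (Nfac k p.2 : ℂ)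
          = ∑ k ∈ Finset.Icc 1 (m - 1), (-1 : ℂ) ^ k * (Nfac k p.2 : ℂ) := by
        apply Finset.sum_subset
        · apply Finset.Icc_subset_Icc le_rfl
          omega
        · intro k hk hnk
          rw [Finset.mem_Icc] at hk hnk
          have hklt : (ppLen p.2).toNat < k := by omega
          rw [Nfac_eq_zero (by omega)]
          simp
      rw [hext]
      have hins : Finset.Icc 0 (m - 1) = insert 0 (Finset.Icc 1 (m - 1)) := by
        ext j
        simp only [Finset.mem_Icc, Finset.mem_insert]
        omega
      rw [hins, Finset.sum_insert (by simp), pow_zero, one_mul, Nfac_zero]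
    have hsum2 : ∑ p ∈ Sfin' u, μ n p.2
        = ∑ k ∈ Finset.Icc 0 (m - 1), (-1 : ℂ) ^ k * (Nfac (k + 1) u : ℂ) := by
      rw [Finset.sum_congr rfl hterm, Finset.sum_comm]
      apply Finset.sum_congr rfl
      intro k _
      rw [← Finset.mul_sum]
      congr 1
      rw [claimB u k, Nat.cast_sum]
    have hμ : μ n u = deltaFn n u
        - ∑ k ∈ Finset.Icc 0 (m - 1), (-1 : ℂ) ^ k * (Nfac (k + 1) u : ℂ) := by
      rw [← hsum2]
      exact eq_sub_of_add_eq hconv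
    have hre : ∑ k ∈ Finset.Icc 1 m, (-1 : ℂ) ^ k * (Nfac k u : ℂ)
        = ∑ k ∈ Finset.Icc 0 (m - 1), (-1 : ℂ) ^ (k + 1) * (Nfac (k + 1) u : ℂ) := by
      apply Finset.sum_nbij' (i := fun k => k - 1) (j := fun k => k + 1)
      · intro a ha
        rw [Finset.mem_Icc] at ha ⊢
        omega
      · intro a ha
        rw [Finset.mem_Icc] at ha ⊢
        omega
      · intro a ha
        rw [Finset.mem_Icc] at ha
        omega
      · intro a ha
        omega
      · intro a ha
        rw [Finset.mem_Icc] at ha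
        have h1 : a - 1 + 1 = a := by omega
        rw [h1]
    rw [hμ, hm, hre]
    rw [show (∑ k ∈ Finset.Icc 0 (m - 1), (-1 : ℂ) ^ (k + 1) * (Nfac (k + 1) u : ℂ))
        = - ∑ k ∈ Finset.Icc 0 (m - 1), (-1 : ℂ) ^ k * (Nfac (k + 1) u : ℂ) by
      rw [← Finset.sum_neg_distrib]
      apply Finset.sum_congr rfl
      intro k _
      ring]
    ring

end Aux
/-- For a partitioned permutation `(𝒰,γ)` with `γ` not the identity, the Möbius function
satisfies `μ(𝒰,γ) = δ(𝒰,γ) + Σ_{k≥1} Σ (−1)^k`, the inner sum being over all tuples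
`(π₁,…,π_k)` of non-identity disc permutations with `(0,π₁)···(0,π_k) = (𝒰,γ)`;
moreover the number of factors `k` in any such factorization is bounded by
`|(𝒰,γ)| = 2|𝒰| − |γ|`, so the sum is finite. -/
theorem mobius_geometric_series (μ : ∀ n, PartitionedPerm n → ℂ)
    (hmult : IsMultiplicativeFn μ)
    (hζμ : ppConv zetaFn μ = deltaFn) (hμζ : ppConv μ zetaFn = deltaFn)
    (n : ℕ) (u : PartitionedPerm n) (hγ : u.perm ≠ 1) :
    (∀ k : ℕ, ppLen u < (k : ℤ) →
      {l : List (PartitionedPerm n) | l.length = k ∧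
        (∀ a ∈ l, a.part = orbitSetoid a.perm ∧ a.perm ≠ 1) ∧
        ppListProd l = some u} = ∅) ∧
    μ n u = deltaFn n u + ∑ k ∈ Finset.Icc 1 (ppLen u).toNat,
      (-1 : ℂ) ^ k * (Nat.card {l : List (PartitionedPerm n) // l.length = k ∧
        (∀ a ∈ l, a.part = orbitSetoid a.perm ∧ a.perm ≠ 1) ∧
        ppListProd l = some u} : ℂ) := by
  refine ⟨fun k hk => facs_empty u k hk, ?_⟩
  have := mu_eq μ hζμ (ppLen u).toNat u rfl
  simpa only [Nfac] using this
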